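/- arXiv:2310.17878 — 2 statements merged into one kernel-verified Lean document; each statement's English description precedes it below -/
import Mathlib

section
/- Let k ≥ 2 be an integer, φ ∈ (0,1), ε ∈ (0,1). Let G = (V,E) be a d-regular graph that admits a (k,φ,ε)-clustering C_1,…,C_k. Then for all i ∈ [k], the cluster center μ_i satisfies | ‖μ_i‖₂² − 1/|C_i| | ≤ (4√ε/φ)·(1/|C_i|). -/
open Finset Matrix Real
open scoped RealInnerProductSpace

/-- Number of edges between `S` and `T`, counted as ordered adjacent pairs
(for disjoint `S`, `T` this is exactly the number of edges of `G` with one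
endpoint in `S` and the other in `T`). -/
def edgesBetween {n : ℕ} (G : SimpleGraph (Fin n)) [DecidableRel G.Adj]
    (S T : Finset (Fin n)) : ℕ :=
  ((S ×ˢ T).filter fun p => G.Adj p.1 p.2).card

/-- Outer conductance `φ_out(C, V) = |E(C, V∖C)| / (d·|C|)`. -/
noncomputable def phiOut {n : ℕ} (G : SimpleGraph (Fin n)) [DecidableRel G.Adj]
    (d : ℕ) (C : Finset (Fin n)) : ℝ :=
  (edgesBetween G C Cᶜ : ℝ) / (d * C.card)

/-- Inner conductance: the minimum over `S ⊆ C`, `0 < |S| ≤ |C|/2`, of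
`|E(S, C∖S)| / (d·|S|)`, when `|C| > 1`, and `1` otherwise. -/
noncomputable def phiIn {n : ℕ} (G : SimpleGraph (Fin n)) [DecidableRel G.Adj]
    (d : ℕ) (C : Finset (Fin n)) : ℝ :=
  if 1 < C.card then
    sInf {r : ℝ | ∃ S, S ⊆ C ∧ 0 < S.card ∧ 2 * S.card ≤ C.card ∧
      r = (edgesBetween G S (C \ S) : ℝ) / (d * S.card)}
  else 1

/-- `C` is a `(k, φ, ε)`-clustering of `G` (with conductances computed with
denominator `d`): a partition of the vertex set into `C 1, …, C k` with
`φ_in(C i) ≥ φ` and `φ_out(C i, V) ≤ ε` for all `i`. -/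
def IsClustering {n : ℕ} (G : SimpleGraph (Fin n)) [DecidableRel G.Adj]
    (d k : ℕ) (φ ε : ℝ) (C : Fin k → Finset (Fin n)) : Prop :=
  (∀ i j, i ≠ j → Disjoint (C i) (C j)) ∧
  (∀ x, ∃ i, x ∈ C i) ∧
  (∀ i, φ ≤ phiIn G d (C i)) ∧
  (∀ i, phiOut G d (C i) ≤ ε)

/-- The normalized Laplacian `L = I - A/d`. -/
noncomputable def normLap {n : ℕ} (G : SimpleGraph (Fin n)) [DecidableRel G.Adj]
    (d : ℕ) : Matrix (Fin n) (Fin n) ℝ :=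
  1 - (d : ℝ)⁻¹ • G.adjMatrix ℝ

/-- `u` is an orthonormal basis of eigenvectors of the normalized Laplacian of `G`,
ordered by nondecreasing eigenvalues `lam`. -/
def IsSpectralBasis {n : ℕ} (G : SimpleGraph (Fin n)) [DecidableRel G.Adj] (d : ℕ)
    (u : Fin n → Fin n → ℝ) (lam : Fin n → ℝ) : Prop :=
  (∀ i j, ∑ x, u i x * u j x = if i = j then 1 else 0) ∧
  (∀ i, normLap G d *ᵥ u i = lam i • u i) ∧
  Monotone lam

/-- The spectral embedding `f_x ∈ ℝ^k`, `f_x(i) = u_i(x)`. -/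
noncomputable def spectralEmbedding {n : ℕ} (u : Fin n → Fin n → ℝ) {k : ℕ}
    (hkn : k ≤ n) (x : Fin n) : EuclideanSpace ℝ (Fin k) :=
  (WithLp.equiv 2 (Fin k → ℝ)).symm fun i => u (Fin.castLE hkn i) x

/-- The center `μ = (1/|C|) ∑_{x ∈ C} f_x` of a cluster `C`. -/
noncomputable def center {n k : ℕ} (f : Fin n → EuclideanSpace ℝ (Fin k))
    (C : Finset (Fin n)) : EuclideanSpace ℝ (Fin k) :=
  ((C.card : ℝ)⁻¹) • ∑ x ∈ C, f x

noncomputable def eB {n : ℕ} (G : SimpleGraph (Fin n)) [DecidableRel G.Adj]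
    (S T : Finset (Fin n)) : ℝ := ∑ x ∈ S, ∑ y ∈ T, if G.Adj x y then (1:ℝ) else 0

lemma eB_eq {n : ℕ} (G : SimpleGraph (Fin n)) [DecidableRel G.Adj] (S T : Finset (Fin n)) :
    eB G S T = (edgesBetween G S T : ℝ) := by
  rw [eB, edgesBetween, Finset.card_filter]
  push_cast
  rw [Finset.sum_product]

lemma eB_comm {n : ℕ} (G : SimpleGraph (Fin n)) [DecidableRel G.Adj] (S T : Finset (Fin n)) :
    eB G S T = eB G T S := by
  rw [eB, eB, Finset.sum_comm]
  refine Finset.sum_congr rfl fun y _ => Finset.sum_congr rfl fun x _ => ?_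
  simp [G.adj_comm]

lemma eB_nonneg {n : ℕ} (G : SimpleGraph (Fin n)) [DecidableRel G.Adj] (S T : Finset (Fin n)) :
    0 ≤ eB G S T := by
  unfold eB; positivity

lemma sweep {n : ℕ} (G : SimpleGraph (Fin n)) [DecidableRel G.Adj]
    {d : ℕ} {φ : ℝ} (hφ : 0 ≤ φ) (C : Finset (Fin n))
    (HP : ∀ S ⊆ C, 0 < S.card → 2 * S.card ≤ C.card →
      φ * d * S.card ≤ eB G S (C \ S)) :
    ∀ N (h : Fin n → ℝ), (C.filter fun x => h x ≠ 0).card ≤ N →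
      (∀ x, 0 ≤ h x) → 2 * (C.filter fun x => h x ≠ 0).card ≤ C.card →
      2 * (φ * ↑d * ∑ x ∈ C, h x) ≤
        ∑ x ∈ C, ∑ y ∈ C, if G.Adj x y then |h x - h y| else 0 := by
  intro N
  induction N with
  | zero =>
    intro h hcard _ _
    have hfe : (C.filter fun x => h x ≠ 0) = ∅ := Finset.card_eq_zero.mp (Nat.le_zero.mp hcard)
    have hz : ∀ x ∈ C, h x = 0 := by
      intro x hx
      by_contra hne
      have : x ∈ C.filter fun x => h x ≠ 0 := Finset.mem_filter.mpr ⟨hx, hne⟩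
      rw [hfe] at this
      exact absurd this (Finset.notMem_empty x)
    have h1 : ∑ x ∈ C, h x = 0 := Finset.sum_eq_zero hz
    have h2 : (0:ℝ) ≤ ∑ x ∈ C, ∑ y ∈ C, if G.Adj x y then |h x - h y| else 0 := by
      refine Finset.sum_nonneg fun x _ => Finset.sum_nonneg fun y _ => ?_
      split <;> positivity
    rw [h1]; linarith
  | succ N ih =>
    intro h hcard hpos hsupp
    set S := C.filter fun x => h x ≠ 0 with hSdef
    rcases S.eq_empty_or_nonempty with hS | hS
    · have hz : ∀ x ∈ C, h x = 0 := by
        intro x hx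
        by_contra hne
        have : x ∈ S := Finset.mem_filter.mpr ⟨hx, hne⟩
        rw [hS] at this
        exact absurd this (Finset.notMem_empty x)
      have h1 : ∑ x ∈ C, h x = 0 := Finset.sum_eq_zero hz
      have h2 : (0:ℝ) ≤ ∑ x ∈ C, ∑ y ∈ C, if G.Adj x y then |h x - h y| else 0 := by
        refine Finset.sum_nonneg fun x _ => Finset.sum_nonneg fun y _ => ?_
        split <;> positivity
      rw [h1]; linarith
    · set m := S.inf' hS h with hmdef
      obtain ⟨x₀, hx₀S, hx₀⟩ := Finset.exists_mem_eq_inf' hS h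
      have hSsub : S ⊆ C := Finset.filter_subset _ _
      have hmle : ∀ x ∈ S, m ≤ h x := fun x hx => Finset.inf'_le _ hx
      have hmpos : 0 < m := by
        rw [hmdef, hx₀]
        rcases Finset.mem_filter.mp hx₀S with ⟨_, hne⟩
        exact lt_of_le_of_ne (hpos x₀) (Ne.symm hne)
      set h' := fun x => max (h x - m) 0 with hh'def
      have hh'pos : ∀ x, 0 ≤ h' x := fun x => le_max_right _ _
      have hzero : ∀ x ∈ C, x ∉ S → h x = 0 := by
        intro x hx hxs
        by_contra hne
        exact hxs (Finset.mem_filter.mpr ⟨hx, hne⟩)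
      have hz' : ∀ x, x ∉ S → h' x ≤ 0 → h' x = 0 := fun x _ hx => le_antisymm hx (hh'pos x)
      have hh'zero : ∀ x ∈ C, x ∉ S → h' x = 0 := by
        intro x hx hxs
        simp only [hh'def, hzero x hx hxs, zero_sub, max_eq_right_iff]
        linarith
      have hh'S : ∀ x ∈ S, h' x = h x - m := by
        intro x hx
        simp only [hh'def]
        exact max_eq_left (by linarith [hmle x hx])
      have hsub : (C.filter fun x => h' x ≠ 0) ⊆ S.erase x₀ := by
        intro x hx
        rcases Finset.mem_filter.mp hx with ⟨hxC, hne⟩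
        have hxS : x ∈ S := by
          by_contra hxs
          exact hne (hh'zero x hxC hxs)
        refine Finset.mem_erase.mpr ⟨?_, hxS⟩
        rintro rfl
        apply hne
        rw [hh'S x hxS, ← hx₀, ← hmdef]; ring
      have hcard' : (C.filter fun x => h' x ≠ 0).card ≤ N := by
        have h1 := Finset.card_le_card hsub
        have h2 := Finset.card_erase_of_mem hx₀S
        have h3 : S.card ≤ N + 1 := hcard
        omega
      have hsupp' : 2 * (C.filter fun x => h' x ≠ 0).card ≤ C.card := by
        have h1 := Finset.card_le_card (hsub.trans (Finset.erase_subset _ _))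
        omega
      have IH := ih h' hcard' hh'pos hsupp'
      -- sum identity
      have hsum : ∑ x ∈ C, h x = ∑ x ∈ C, h' x + m * S.card := by
        have : ∀ x ∈ C, h x = h' x + (if x ∈ S then m else 0) := by
          intro x hx
          by_cases hxS : x ∈ S
          · rw [hh'S x hxS, if_pos hxS]; ring
          · rw [hh'zero x hx hxS, hzero x hx hxS, if_neg hxS]; ring
        rw [Finset.sum_congr rfl this, Finset.sum_add_distrib, Finset.sum_ite_mem,
          Finset.inter_eq_right.mpr hSsub, Finset.sum_const, nsmul_eq_mul]
        ring
      -- RHS inequality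
      have hHP : φ * ↑d * ↑S.card ≤ eB G S (C \ S) := by
        refine HP S hSsub (Finset.card_pos.mpr hS) hsupp
      have hpoint : ∀ x ∈ C, ∀ y ∈ C, (if G.Adj x y then |h' x - h' y| else 0)
          + (if G.Adj x y then (if x ∈ S ∧ y ∉ S then m else 0) else 0)
          + (if G.Adj x y then (if x ∉ S ∧ y ∈ S then m else 0) else 0)
          ≤ (if G.Adj x y then |h x - h y| else 0) := by
        intro x hx y hy
        by_cases hadj : G.Adj x y
        · simp only [if_pos hadj]
          by_cases hxS : x ∈ S <;> by_cases hyS : y ∈ S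
          · rw [hh'S x hxS, hh'S y hyS]
            simp only [hxS, hyS, not_true_eq_false, and_false, false_and, if_false, add_zero]
            apply le_of_eq; congr 1; ring
          · rw [hh'S x hxS, hh'zero y hy hyS, hzero y hy hyS]
            simp only [hxS, hyS, and_true, and_false, not_true_eq_false, false_and, if_true,
              if_false, not_false_eq_true, true_and]
            rw [sub_zero, sub_zero, abs_of_nonneg (hpos x), abs_of_nonneg (by linarith [hmle x hxS])]
            linarith
          · rw [hh'S y hyS, hh'zero x hx hxS, hzero x hx hxS]
            simp only [hxS, hyS, false_and, if_false, not_false_eq_true, true_and, if_true]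
            rw [zero_sub, zero_sub, abs_neg, abs_neg, abs_of_nonneg (hpos y),
              abs_of_nonneg (by linarith [hmle y hyS])]
            linarith
          · rw [hh'zero x hx hxS, hh'zero y hy hyS, hzero x hx hxS, hzero y hy hyS]
            simp [hxS, hyS]
        · simp [hadj]
      have hsplit : ∑ x ∈ C, ∑ y ∈ C, ((if G.Adj x y then |h' x - h' y| else 0)
          + (if G.Adj x y then (if x ∈ S ∧ y ∉ S then m else 0) else 0)
          + (if G.Adj x y then (if x ∉ S ∧ y ∈ S then m else 0) else 0))
          ≤ ∑ x ∈ C, ∑ y ∈ C, if G.Adj x y then |h x - h y| else 0 := by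
        refine Finset.sum_le_sum fun x hx => Finset.sum_le_sum fun y hy => hpoint x hx y hy
      have hinner : ∀ x ∈ S, ∑ y ∈ C, (if G.Adj x y then (if x ∈ S ∧ y ∉ S then m else 0) else 0)
          = ∑ y ∈ C \ S, m * (if G.Adj x y then 1 else 0) := by
        intro x hxS
        rw [show ∑ y ∈ C \ S, m * (if G.Adj x y then (1:ℝ) else 0)
            = ∑ y ∈ C ∩ (C \ S), m * (if G.Adj x y then (1:ℝ) else 0) by
          rw [Finset.inter_eq_right.mpr Finset.sdiff_subset], ← Finset.sum_ite_mem]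
        refine Finset.sum_congr rfl fun y hyC => ?_
        by_cases hyS : y ∈ S <;> by_cases hadj : G.Adj x y <;>
          simp [hxS, hyS, hadj, Finset.mem_sdiff, hyC]
      have hT2 : ∑ x ∈ C, ∑ y ∈ C, (if G.Adj x y then (if x ∈ S ∧ y ∉ S then m else 0) else 0)
          = m * eB G S (C \ S) := by
        rw [eB, Finset.mul_sum]
        rw [show ∑ x ∈ S, m * ∑ y ∈ C \ S, (if G.Adj x y then (1:ℝ) else 0)
            = ∑ x ∈ C ∩ S, m * ∑ y ∈ C \ S, (if G.Adj x y then (1:ℝ) else 0) by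
          rw [Finset.inter_eq_right.mpr hSsub], ← Finset.sum_ite_mem]
        refine Finset.sum_congr rfl fun x hxC => ?_
        by_cases hxS : x ∈ S
        · rw [if_pos hxS, hinner x hxS, Finset.mul_sum]
        · rw [if_neg hxS]
          exact Finset.sum_eq_zero fun y hy => by simp [hxS]
      have hinner' : ∀ y, ∀ x ∈ C \ S, (if G.Adj x y then (if x ∉ S ∧ y ∈ S then m else 0) else 0)
          = (if y ∈ S then (if G.Adj x y then m else 0) else 0) := by
        intro y x hx
        have hxS : x ∉ S := (Finset.mem_sdiff.mp hx).2
        by_cases hyS : y ∈ S <;> by_cases hadj : G.Adj x y <;> simp [hxS, hyS, hadj]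
      have hT3 : ∑ x ∈ C, ∑ y ∈ C, (if G.Adj x y then (if x ∉ S ∧ y ∈ S then m else 0) else 0)
          = m * eB G (C \ S) S := by
        rw [eB, Finset.mul_sum]
        rw [show ∑ x ∈ C \ S, m * ∑ y ∈ S, (if G.Adj x y then (1:ℝ) else 0)
            = ∑ x ∈ C ∩ (C \ S), m * ∑ y ∈ S, (if G.Adj x y then (1:ℝ) else 0) by
          rw [Finset.inter_eq_right.mpr Finset.sdiff_subset], ← Finset.sum_ite_mem]
        refine Finset.sum_congr rfl fun x hxC => ?_
        by_cases hxS : x ∈ S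
        · rw [if_neg (by simp [hxS, Finset.mem_sdiff])]
          exact Finset.sum_eq_zero fun y hy => by
            by_cases hadj : G.Adj x y <;> simp [hxS, hadj]
        · have hxCS : x ∈ C \ S := Finset.mem_sdiff.mpr ⟨hxC, hxS⟩
          rw [if_pos hxCS, Finset.mul_sum]
          rw [show ∑ y ∈ S, m * (if G.Adj x y then (1:ℝ) else 0)
              = ∑ y ∈ C ∩ S, m * (if G.Adj x y then (1:ℝ) else 0) by
            rw [Finset.inter_eq_right.mpr hSsub], ← Finset.sum_ite_mem]
          refine Finset.sum_congr rfl fun y hyC => ?_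
          by_cases hyS : y ∈ S <;> by_cases hadj : G.Adj x y <;> simp [hxS, hyS, hadj]
      have hdist : ∑ x ∈ C, ∑ y ∈ C, ((if G.Adj x y then |h' x - h' y| else 0)
          + (if G.Adj x y then (if x ∈ S ∧ y ∉ S then m else 0) else 0)
          + (if G.Adj x y then (if x ∉ S ∧ y ∈ S then m else 0) else 0))
          = (∑ x ∈ C, ∑ y ∈ C, if G.Adj x y then |h' x - h' y| else 0)
          + (∑ x ∈ C, ∑ y ∈ C, (if G.Adj x y then (if x ∈ S ∧ y ∉ S then m else 0) else 0))
          + (∑ x ∈ C, ∑ y ∈ C, (if G.Adj x y then (if x ∉ S ∧ y ∈ S then m else 0) else 0)) := by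
        simp [Finset.sum_add_distrib]
      have hcut2 : m * (φ * ↑d * ↑S.card) ≤ m * eB G S (C \ S) :=
        mul_le_mul_of_nonneg_left hHP hmpos.le
      have hcut3 : m * (φ * ↑d * ↑S.card) ≤ m * eB G (C \ S) S := by
        rw [← eB_comm]
        exact mul_le_mul_of_nonneg_left hHP hmpos.le
      rw [hsum]
      rw [hdist] at hsplit
      have hSnonneg : (0:ℝ) ≤ (S.card : ℝ) := Nat.cast_nonneg _
      nlinarith [IH, hsplit, hcut2, hcut3]

lemma cheeger_pos {n : ℕ} (G : SimpleGraph (Fin n)) [DecidableRel G.Adj]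
    {d : ℕ} {φ : ℝ} (hφ : 0 ≤ φ) (hd : 0 < d) (C : Finset (Fin n))
    (hreg : G.IsRegularOfDegree d)
    (HP : ∀ S ⊆ C, 0 < S.card → 2 * S.card ≤ C.card →
      φ * d * S.card ≤ eB G S (C \ S))
    (f : Fin n → ℝ) (hf : ∀ x, 0 ≤ f x)
    (hsupp : 2 * (C.filter fun x => f x ≠ 0).card ≤ C.card) :
    φ^2 * ↑d * ∑ x ∈ C, f x ^ 2 ≤
      ∑ x ∈ C, ∑ y ∈ C, if G.Adj x y then (f x - f y)^2 else 0 := by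
  classical
  set Stot : ℝ := ∑ x ∈ C, f x ^ 2 with hStotdef
  have hStotnonneg : 0 ≤ Stot := Finset.sum_nonneg fun x _ => sq_nonneg _
  set P : ℝ := ∑ x ∈ C, ∑ y ∈ C, if G.Adj x y then (f x - f y)^2 else 0 with hPdef
  have hPnonneg : 0 ≤ P := by
    refine Finset.sum_nonneg fun x _ => Finset.sum_nonneg fun y _ => ?_
    split <;> positivity
  rcases eq_or_lt_of_le hStotnonneg with hStot | hStotpos
  · rw [← hStot]; simpa using hPnonneg
  -- support of f² equals support of f
  have hfilter : (C.filter fun x => f x ^ 2 ≠ 0) = (C.filter fun x => f x ≠ 0) := by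
    refine Finset.filter_congr fun x _ => ?_
    simp [pow_eq_zero_iff]
  have hA := sweep G hφ C HP (C.filter fun x => f x ^ 2 ≠ 0).card (fun x => f x ^ 2)
    le_rfl (fun x => sq_nonneg _) (by rw [hfilter]; exact hsupp)
  -- rewrite sum of f² over C
  set A : ℝ := ∑ x ∈ C, ∑ y ∈ C, if G.Adj x y then |f x ^ 2 - f y ^ 2| else 0 with hAdef
  have hA' : 2 * (φ * ↑d * Stot) ≤ A := hA
  -- Cauchy-Schwarz
  set B : ℝ := ∑ x ∈ C, ∑ y ∈ C, if G.Adj x y then (f x + f y)^2 else 0 with hBdef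
  have hCS : A ^ 2 ≤ P * B := by
    have h1 : A = ∑ p ∈ C ×ˢ C, (if G.Adj p.1 p.2 then |f p.1 - f p.2| else 0) *
        (if G.Adj p.1 p.2 then (f p.1 + f p.2) else 0) := by
      rw [hAdef, Finset.sum_product]
      refine Finset.sum_congr rfl fun x _ => Finset.sum_congr rfl fun y _ => ?_
      by_cases hadj : G.Adj x y
      · simp only [if_pos hadj]
        rw [show f x ^ 2 - f y ^ 2 = (f x - f y) * (f x + f y) by ring, abs_mul,
          abs_of_nonneg (add_nonneg (hf x) (hf y))]
      · simp [hadj]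
    have h2 : P = ∑ p ∈ C ×ˢ C, (if G.Adj p.1 p.2 then |f p.1 - f p.2| else 0) ^ 2 := by
      rw [hPdef, Finset.sum_product]
      refine Finset.sum_congr rfl fun x _ => Finset.sum_congr rfl fun y _ => ?_
      by_cases hadj : G.Adj x y <;> simp [hadj, sq_abs]
    have h3 : B = ∑ p ∈ C ×ˢ C, (if G.Adj p.1 p.2 then (f p.1 + f p.2) else 0) ^ 2 := by
      rw [hBdef, Finset.sum_product]
      refine Finset.sum_congr rfl fun x _ => Finset.sum_congr rfl fun y _ => ?_
      by_cases hadj : G.Adj x y <;> simp [hadj]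
    rw [h1, h2, h3]
    exact Finset.sum_mul_sq_le_sq_mul_sq _ _ _
  -- degree bound
  have hdeg : ∀ x, ((C.filter fun y => G.Adj x y).card : ℝ) ≤ d := by
    intro x
    have hsub : (C.filter fun y => G.Adj x y) ⊆ G.neighborFinset x := by
      intro y hy
      exact G.mem_neighborFinset x y |>.mpr (Finset.mem_filter.mp hy).2
    have := Finset.card_le_card hsub
    rw [SimpleGraph.neighborFinset, Set.toFinset_card] at this
    have hd' := hreg x
    rw [SimpleGraph.degree] at hd'
    exact_mod_cast this.trans (le_of_eq (by rw [← hd', SimpleGraph.neighborFinset, Set.toFinset_card]))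
  have hB4 : B ≤ 4 * ↑d * Stot := by
    have hstep : B ≤ (∑ x ∈ C, ∑ y ∈ C, (if G.Adj x y then 2 * f x ^ 2 else 0))
        + (∑ x ∈ C, ∑ y ∈ C, (if G.Adj x y then 2 * f y ^ 2 else 0)) := by
      rw [hBdef, ← Finset.sum_add_distrib]
      refine Finset.sum_le_sum fun x _ => ?_
      rw [← Finset.sum_add_distrib]
      refine Finset.sum_le_sum fun y _ => ?_
      by_cases hadj : G.Adj x y
      · simp only [if_pos hadj]; nlinarith [sq_nonneg (f x - f y)]
      · simp [hadj]
    have hx2 : ∑ x ∈ C, ∑ y ∈ C, (if G.Adj x y then 2 * f x ^ 2 else 0) ≤ 2 * ↑d * Stot := by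
      rw [hStotdef, Finset.mul_sum]
      refine Finset.sum_le_sum fun x _ => ?_
      rw [← Finset.sum_filter, Finset.sum_const, nsmul_eq_mul]
      calc ((C.filter fun y => G.Adj x y).card : ℝ) * (2 * f x ^ 2)
          ≤ ↑d * (2 * f x ^ 2) := mul_le_mul_of_nonneg_right (hdeg x) (by positivity)
        _ = 2 * ↑d * f x ^ 2 := by ring
    have hy2 : ∑ x ∈ C, ∑ y ∈ C, (if G.Adj x y then 2 * f y ^ 2 else 0) ≤ 2 * ↑d * Stot := by
      rw [Finset.sum_comm, hStotdef, Finset.mul_sum]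
      refine Finset.sum_le_sum fun y _ => ?_
      have hfc : (C.filter fun x => G.Adj x y) = (C.filter fun x => G.Adj y x) := by
        refine Finset.filter_congr fun x _ => by rw [G.adj_comm]
      rw [← Finset.sum_filter, hfc, Finset.sum_const, nsmul_eq_mul]
      calc ((C.filter fun x => G.Adj y x).card : ℝ) * (2 * f y ^ 2)
          ≤ ↑d * (2 * f y ^ 2) := mul_le_mul_of_nonneg_right (hdeg y) (by positivity)
        _ = 2 * ↑d * f y ^ 2 := by ring
    linarith
  have hdpos : (0:ℝ) < (d:ℝ) := by exact_mod_cast hd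
  have hA0 : (0:ℝ) ≤ 2 * (φ * ↑d * Stot) := by positivity
  have hsq : (2 * (φ * ↑d * Stot))^2 ≤ A^2 := by
    exact pow_le_pow_left₀ hA0 hA' 2
  have hPB : P * B ≤ P * (4 * ↑d * Stot) := mul_le_mul_of_nonneg_left hB4 hPnonneg
  nlinarith [mul_pos hdpos hStotpos, hsq, hCS, hPB]

lemma exists_median {n : ℕ} (C : Finset (Fin n)) (w : Fin n → ℝ) :
    ∃ c : ℝ, 2 * (C.filter fun x => c < w x).card ≤ C.card ∧
      2 * (C.filter fun x => w x < c).card ≤ C.card := by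
  classical
  rcases C.eq_empty_or_nonempty with hC | hC
  · exact ⟨0, by simp [hC]⟩
  set T := (C.image w).filter fun t => C.card ≤ 2 * (C.filter fun x => w x ≤ t).card with hTdef
  have hTne : T.Nonempty := by
    refine ⟨(C.image w).max' (hC.image w), Finset.mem_filter.mpr ⟨Finset.max'_mem _ _, ?_⟩⟩
    have : (C.filter fun x => w x ≤ (C.image w).max' (hC.image w)) = C := by
      refine Finset.filter_true_of_mem fun x hx => ?_
      exact Finset.le_max' _ _ (Finset.mem_image_of_mem w hx)
    rw [this]; omega
  set c := T.min' hTne with hcdef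
  have hcT : c ∈ T := Finset.min'_mem _ _
  have hcle : C.card ≤ 2 * (C.filter fun x => w x ≤ c).card := (Finset.mem_filter.mp hcT).2
  refine ⟨c, ?_, ?_⟩
  · have hsplit := Finset.card_filter_add_card_filter_not (s := C)
      (p := fun x => c < w x)
    have : (C.filter fun x => ¬ c < w x) = (C.filter fun x => w x ≤ c) := by
      refine Finset.filter_congr fun x _ => by simp [not_lt]
    rw [this] at hsplit
    omega
  · by_contra hcon
    push_neg at hcon
    have hFne : (C.filter fun x => w x < c).Nonempty := by
      rw [← Finset.card_pos]; omega
    set c' := ((C.filter fun x => w x < c).image w).max' (hFne.image w) with hc'def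
    obtain ⟨x₀, hx₀, hwx₀'⟩ := Finset.mem_image.mp (Finset.max'_mem _ (hFne.image w))
    have hwx₀ : w x₀ = c' := hwx₀'
    have hc'lt : c' < c := by rw [← hwx₀]; exact (Finset.mem_filter.mp hx₀).2
    have hsub : (C.filter fun x => w x < c) ⊆ (C.filter fun x => w x ≤ c') := by
      intro x hx
      rcases Finset.mem_filter.mp hx with ⟨hxC, _⟩
      refine Finset.mem_filter.mpr ⟨hxC, ?_⟩
      exact Finset.le_max' _ _ (Finset.mem_image_of_mem w hx)
    have hcard := Finset.card_le_card hsub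
    have hc'T : c' ∈ T := by
      refine Finset.mem_filter.mpr ⟨?_, by omega⟩
      rw [← hwx₀]
      exact Finset.mem_image_of_mem w (Finset.mem_filter.mp hx₀).1
    have := Finset.min'_le _ _ hc'T
    rw [← hcdef] at this
    linarith

lemma cluster_gap {n : ℕ} (G : SimpleGraph (Fin n)) [DecidableRel G.Adj]
    {d : ℕ} {φ : ℝ} (hφ : 0 ≤ φ) (hd : 0 < d) (C : Finset (Fin n))
    (hreg : G.IsRegularOfDegree d)
    (HP : ∀ S ⊆ C, 0 < S.card → 2 * S.card ≤ C.card →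
      φ * d * S.card ≤ eB G S (C \ S))
    (v : Fin n → ℝ) (hsum : ∑ x ∈ C, v x = 0) :
    φ^2 * ↑d * ∑ x ∈ C, v x ^ 2 ≤
      ∑ x ∈ C, ∑ y ∈ C, if G.Adj x y then (v x - v y)^2 else 0 := by
  classical
  obtain ⟨c, hmed1, hmed2⟩ := exists_median C v
  set p := fun x => max (v x - c) 0 with hpdef
  set q := fun x => max (c - v x) 0 with hqdef
  have hppos : ∀ x, 0 ≤ p x := fun x => le_max_right _ _
  have hqpos : ∀ x, 0 ≤ q x := fun x => le_max_right _ _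
  have hpq : ∀ x, p x - q x = v x - c := by
    intro x
    rcases le_or_gt (v x) c with h | h
    · rw [hpdef, hqdef]
      simp only []
      rw [max_eq_right (by linarith : v x - c ≤ 0), max_eq_left (by linarith : 0 ≤ c - v x)]
      ring
    · rw [hpdef, hqdef]
      simp only []
      rw [max_eq_left (by linarith : 0 ≤ v x - c), max_eq_right (by linarith : c - v x ≤ 0)]
      ring
  have hpqz : ∀ x, p x * q x = 0 := by
    intro x
    rcases le_or_gt (v x) c with h | h
    · rw [hpdef]; simp only []
      rw [max_eq_right (by linarith : v x - c ≤ 0), zero_mul]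
    · rw [hqdef]; simp only []
      rw [max_eq_right (by linarith : c - v x ≤ 0), mul_zero]
  have hpf : (C.filter fun x => p x ≠ 0) = (C.filter fun x => c < v x) := by
    refine Finset.filter_congr fun x _ => ?_
    rcases le_or_gt (v x) c with h | h
    · simp [hpdef, max_eq_right (by linarith : v x - c ≤ 0), not_lt.mpr h]
    · have h0 : 0 < v x - c := by linarith
      simp [hpdef, max_eq_left h0.le, ne_of_gt h0, h]
  have hqf : (C.filter fun x => q x ≠ 0) = (C.filter fun x => v x < c) := by
    refine Finset.filter_congr fun x _ => ?_
    rcases le_or_gt c (v x) with h | h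
    · simp [hqdef, max_eq_right (by linarith : c - v x ≤ 0), not_lt.mpr h]
    · have h0 : 0 < c - v x := by linarith
      simp [hqdef, max_eq_left h0.le, ne_of_gt h0, h]
  have hP := cheeger_pos G hφ hd C hreg HP p hppos (by rw [hpf]; exact hmed1)
  have hQ := cheeger_pos G hφ hd C hreg HP q hqpos (by rw [hqf]; exact hmed2)
  have hsumsq : ∑ x ∈ C, v x ^ 2 ≤ (∑ x ∈ C, p x ^ 2) + (∑ x ∈ C, q x ^ 2) := by
    have h1 : (∑ x ∈ C, p x ^ 2) + (∑ x ∈ C, q x ^ 2) = ∑ x ∈ C, (v x - c)^2 := by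
      rw [← Finset.sum_add_distrib]
      refine Finset.sum_congr rfl fun x _ => ?_
      have e1 : p x ^2 + q x ^2 = (p x - q x)^2 + 2*(p x * q x) := by ring
      rw [e1, hpqz x, hpq x]; ring
    have h2 : ∑ x ∈ C, (v x - c)^2 = (∑ x ∈ C, v x ^ 2) + C.card * c^2 := by
      have : ∀ x ∈ C, (v x - c)^2 = v x ^2 - 2*c*(v x) + c^2 := fun x _ => by ring
      rw [Finset.sum_congr rfl this]
      rw [Finset.sum_add_distrib, Finset.sum_sub_distrib, ← Finset.mul_sum, hsum,
        Finset.sum_const, nsmul_eq_mul]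
      ring
    have h3 : (0:ℝ) ≤ C.card * c^2 := by positivity
    linarith
  have hpoint : ∑ x ∈ C, ∑ y ∈ C, ((if G.Adj x y then (p x - p y)^2 else 0)
      + (if G.Adj x y then (q x - q y)^2 else 0))
      ≤ ∑ x ∈ C, ∑ y ∈ C, if G.Adj x y then (v x - v y)^2 else 0 := by
    refine Finset.sum_le_sum fun x _ => Finset.sum_le_sum fun y _ => ?_
    by_cases hadj : G.Adj x y
    · simp only [if_pos hadj]
      have h1 := hpq x; have h2 := hpq y
      have h3 := hpqz x; have h4 := hpqz y
      have h5 : v x - v y = (p x - q x) - (p y - q y) := by linarith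
      have e2 : (v x - v y)^2 = (p x - p y)^2 + (q x - q y)^2
          - 2*((p x - p y)*(q x - q y)) := by rw [h5]; ring
      have e3 : (p x - p y)*(q x - q y)
          = p x * q x + p y * q y - (p x * q y + p y * q x) := by ring
      have e4 : (0:ℝ) ≤ p x * q y := mul_nonneg (hppos x) (hqpos y)
      have e5 : (0:ℝ) ≤ p y * q x := mul_nonneg (hppos y) (hqpos x)
      linarith
    · simp [hadj]
  have hdist : (∑ x ∈ C, ∑ y ∈ C, ((if G.Adj x y then (p x - p y)^2 else 0)
      + (if G.Adj x y then (q x - q y)^2 else 0)))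
      = (∑ x ∈ C, ∑ y ∈ C, (if G.Adj x y then (p x - p y)^2 else 0))
      + (∑ x ∈ C, ∑ y ∈ C, (if G.Adj x y then (q x - q y)^2 else 0)) := by
    simp [Finset.sum_add_distrib]
  rw [hdist] at hpoint
  have hφd : (0:ℝ) ≤ φ^2 * ↑d := by positivity
  have := mul_le_mul_of_nonneg_left hsumsq hφd
  nlinarith [hP, hQ, hpoint]

noncomputable def S2 {n : ℕ} (G : SimpleGraph (Fin n)) [DecidableRel G.Adj]
    (v : Fin n → ℝ) : ℝ := ∑ x, ∑ y, if G.Adj x y then v x * v y else 0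

noncomputable def QF {n : ℕ} (G : SimpleGraph (Fin n)) [DecidableRel G.Adj]
    (v : Fin n → ℝ) : ℝ := ∑ x, ∑ y, if G.Adj x y then (v x - v y)^2 else 0

lemma dot_lap {n : ℕ} (G : SimpleGraph (Fin n)) [DecidableRel G.Adj]
    (d : ℕ) (v : Fin n → ℝ) :
    ∑ x, v x * ((normLap G d *ᵥ v) x) = ∑ x, v x ^ 2 - (d:ℝ)⁻¹ * S2 G v := by
  have hmv : ∀ x, (normLap G d *ᵥ v) x = v x - (d:ℝ)⁻¹ * ∑ y, if G.Adj x y then v y else 0 := by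
    intro x
    rw [normLap, Matrix.sub_mulVec, Matrix.one_mulVec, Matrix.smul_mulVec]
    simp only [Pi.sub_apply, Pi.smul_apply, smul_eq_mul]
    congr 2
    rw [SimpleGraph.adjMatrix_mulVec_apply, SimpleGraph.neighborFinset_eq_filter,
      Finset.sum_filter]
  have key : ∀ x, v x * ((normLap G d *ᵥ v) x)
      = v x ^ 2 - (d:ℝ)⁻¹ * ∑ y, if G.Adj x y then v x * v y else 0 := by
    intro x
    rw [hmv x]
    have h2 : ∑ y, (if G.Adj x y then v x * v y else 0)
        = v x * ∑ y, (if G.Adj x y then v y else 0) := by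
      rw [Finset.mul_sum]
      exact Finset.sum_congr rfl fun y _ => by split <;> ring
    rw [h2]; ring
  rw [Finset.sum_congr rfl fun x _ => key x, Finset.sum_sub_distrib, S2, ← Finset.mul_sum]

lemma qf_eq {n d : ℕ} (G : SimpleGraph (Fin n)) [DecidableRel G.Adj]
    (hreg : G.IsRegularOfDegree d) (v : Fin n → ℝ) :
    QF G v = 2 * d * ∑ x, v x ^ 2 - 2 * S2 G v := by
  have hdeg : ∀ x : Fin n, ((Finset.univ.filter fun y => G.Adj x y).card : ℝ) = d := by
    intro x
    have := hreg x
    rw [← SimpleGraph.neighborFinset_eq_filter]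
    exact_mod_cast this
  have hx : ∑ x, ∑ y, (if G.Adj x y then v x ^ 2 else 0) = d * ∑ x, v x ^ 2 := by
    rw [Finset.mul_sum]
    refine Finset.sum_congr rfl fun x _ => ?_
    rw [← Finset.sum_filter, Finset.sum_const, nsmul_eq_mul, hdeg x]
  have hy : ∑ x, ∑ y : Fin n, (if G.Adj x y then v y ^ 2 else 0) = d * ∑ x, v x ^ 2 := by
    rw [Finset.sum_comm, Finset.mul_sum]
    refine Finset.sum_congr rfl fun y _ => ?_
    have hfc : (Finset.univ.filter fun x : Fin n => G.Adj x y)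
        = (Finset.univ.filter fun x => G.Adj y x) :=
      Finset.filter_congr fun x _ => by rw [G.adj_comm]
    rw [← Finset.sum_filter, hfc, Finset.sum_const, nsmul_eq_mul, hdeg y]
  have hsplit : QF G v + 2 * S2 G v = (∑ x, ∑ y, (if G.Adj x y then v x ^ 2 else 0))
      + (∑ x, ∑ y : Fin n, (if G.Adj x y then v y ^ 2 else 0)) := by
    rw [QF, S2, Finset.mul_sum, ← Finset.sum_add_distrib, ← Finset.sum_add_distrib]
    refine Finset.sum_congr rfl fun x _ => ?_
    rw [Finset.mul_sum, ← Finset.sum_add_distrib, ← Finset.sum_add_distrib]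
    refine Finset.sum_congr rfl fun y _ => by split <;> ring
  linarith [hsplit, hx, hy]

lemma dot_lap_qf {n d : ℕ} (G : SimpleGraph (Fin n)) [DecidableRel G.Adj]
    (hd : 0 < d) (hreg : G.IsRegularOfDegree d) (v : Fin n → ℝ) :
    ∑ x, v x * ((normLap G d *ᵥ v) x) = (2 * d : ℝ)⁻¹ * QF G v := by
  have hd' : (d:ℝ) ≠ 0 := by positivity
  rw [dot_lap, qf_eq G hreg]
  field_simp

section
variable {n d : ℕ} (G : SimpleGraph (Fin n)) [DecidableRel G.Adj]
  {u : Fin n → Fin n → ℝ} {lam : Fin n → ℝ}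

lemma dot_expand (hu : IsSpectralBasis G d u lam) {ι : Type} [Fintype ι] [DecidableEq ι]
    (e : ι → Fin n) (he : Function.Injective e) (a b : ι → ℝ) :
    ∑ x, (∑ j, a j * u (e j) x) * (∑ j, b j * u (e j) x) = ∑ j, a j * b j := by
  have key : ∀ j l : ι, ∑ x, (a j * u (e j) x) * (b l * u (e l) x)
      = if j = l then a j * b j else 0 := by
    intro j l
    have h1 : ∑ x, (a j * u (e j) x) * (b l * u (e l) x)
        = a j * b l * ∑ x, u (e j) x * u (e l) x := by
      rw [Finset.mul_sum]; exact Finset.sum_congr rfl fun x _ => by ring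
    rw [h1, hu.1 (e j) (e l)]
    by_cases h : j = l
    · subst h; rw [if_pos rfl, if_pos rfl, mul_one]
    · rw [if_neg (fun hh => h (he hh)), if_neg h, mul_zero]
  calc ∑ x, (∑ j, a j * u (e j) x) * (∑ j, b j * u (e j) x)
      = ∑ x, ∑ j, ∑ l, (a j * u (e j) x) * (b l * u (e l) x) := by
        exact Finset.sum_congr rfl fun x _ => by rw [Finset.sum_mul_sum]
    _ = ∑ j, ∑ l, ∑ x, (a j * u (e j) x) * (b l * u (e l) x) := by
        rw [Finset.sum_comm]
        exact Finset.sum_congr rfl fun j _ => Finset.sum_comm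
    _ = ∑ j, ∑ l, if j = l then a j * b j else 0 := by
        exact Finset.sum_congr rfl fun j _ => Finset.sum_congr rfl fun l _ => key j l
    _ = ∑ j, a j * b j := by
        exact Finset.sum_congr rfl fun j _ => by
          rw [Finset.sum_ite_eq Finset.univ j fun l => a j * b j]
          simp
    
lemma lap_on_expand (hu : IsSpectralBasis G d u lam) {ι : Type} [Fintype ι]
    (e : ι → Fin n) (c : ι → ℝ) (x : Fin n) :
    (normLap G d *ᵥ fun y => ∑ j, c j * u (e j) y) x
      = ∑ j, (c j * lam (e j)) * u (e j) x := by
  calc (normLap G d *ᵥ fun y => ∑ j, c j * u (e j) y) x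
      = ∑ y, normLap G d x y * ∑ j, c j * u (e j) y := rfl
    _ = ∑ y, ∑ j, c j * (normLap G d x y * u (e j) y) := by
        refine Finset.sum_congr rfl fun y _ => ?_
        rw [Finset.mul_sum]
        exact Finset.sum_congr rfl fun j _ => by ring
    _ = ∑ j, ∑ y, c j * (normLap G d x y * u (e j) y) := Finset.sum_comm
    _ = ∑ j, c j * ((normLap G d *ᵥ u (e j)) x) := by
        refine Finset.sum_congr rfl fun j _ => ?_
        rw [← Finset.mul_sum]
        rfl
    _ = ∑ j, (c j * lam (e j)) * u (e j) x := by
        refine Finset.sum_congr rfl fun j _ => ?_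
        rw [hu.2.1 (e j)]
        simp [mul_assoc]

lemma lam_nonneg (hd : 0 < d) (hreg : G.IsRegularOfDegree d)
    (hu : IsSpectralBasis G d u lam) (j : Fin n) : 0 ≤ lam j := by
  have h1 : ∑ x, u j x * ((normLap G d *ᵥ u j) x) = lam j := by
    rw [hu.2.1 j]
    have : ∀ x, u j x * ((lam j • u j) x) = lam j * (u j x * u j x) := by
      intro x; simp [Pi.smul_apply, smul_eq_mul]; ring
    rw [Finset.sum_congr rfl fun x _ => this x, ← Finset.mul_sum, hu.1 j j]
    simp
  have h2 := dot_lap_qf G hd hreg (u j)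
  have h3 : 0 ≤ QF G (u j) := by
    refine Finset.sum_nonneg fun x _ => Finset.sum_nonneg fun y _ => ?_
    split <;> positivity
  have h4 : (0:ℝ) ≤ (2 * d : ℝ)⁻¹ := by positivity
  rw [← h1, h2]
  positivity

lemma col_orthonormal (hu : IsSpectralBasis G d u lam) (x y : Fin n) :
    ∑ j, u j x * u j y = if x = y then (1:ℝ) else 0 := by
  classical
  set U : Matrix (Fin n) (Fin n) ℝ := Matrix.of u with hU
  have h1 : U * Uᵀ = 1 := by
    ext i j
    rw [Matrix.mul_apply, Matrix.one_apply]
    calc ∑ x, U i x * Uᵀ x j = ∑ x, u i x * u j x := by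
          exact Finset.sum_congr rfl fun x _ => by rw [hU]; rfl
      _ = _ := hu.1 i j
  have h2 : Uᵀ * U = 1 := mul_eq_one_comm.mp h1
  calc ∑ j, u j x * u j y = ∑ j, Uᵀ x j * U j y := by
        exact Finset.sum_congr rfl fun j _ => by rw [hU]; rfl
    _ = (Uᵀ * U) x y := (Matrix.mul_apply).symm
    _ = (1 : Matrix (Fin n) (Fin n) ℝ) x y := by rw [h2]
    _ = if x = y then 1 else 0 := Matrix.one_apply

lemma expand_indicator (hu : IsSpectralBasis G d u lam) (C : Finset (Fin n)) (x : Fin n) :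
    (if x ∈ C then (1:ℝ) else 0) = ∑ j, (∑ y ∈ C, u j y) * u j x := by
  classical
  symm
  calc ∑ j, (∑ y ∈ C, u j y) * u j x = ∑ j, ∑ y ∈ C, u j y * u j x := by
        exact Finset.sum_congr rfl fun j _ => Finset.sum_mul _ _ _
    _ = ∑ y ∈ C, ∑ j, u j y * u j x := Finset.sum_comm
    _ = ∑ y ∈ C, (if y = x then (1:ℝ) else 0) := by
        exact Finset.sum_congr rfl fun y _ => col_orthonormal G hu y x
    _ = if x ∈ C then 1 else 0 := by rw [Finset.sum_ite_eq' C x fun _ => (1:ℝ)]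

end

set_option maxHeartbeats 2000000 in
/-- Lemma 7(1) of Gluch et al.. For a `d`-regular graph admitting a
`(k,φ,ε)`-clustering `C_1,…,C_k`, every cluster center satisfies
`| ‖μ_i‖₂² - 1/|C_i| | ≤ (4√ε/φ)·(1/|C_i|)`. -/
theorem statement_6 {n d k : ℕ} (hd : 3 ≤ d) (hk : 2 ≤ k) (hkn : k ≤ n)
    {φ ε : ℝ} (hφ : φ ∈ Set.Ioo (0:ℝ) 1) (hε : ε ∈ Set.Ioo (0:ℝ) 1)
    (G : SimpleGraph (Fin n)) [DecidableRel G.Adj] (hreg : G.IsRegularOfDegree d)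
    (C : Fin k → Finset (Fin n)) (hC : IsClustering G d k φ ε C)
    (u : Fin n → Fin n → ℝ) (lam : Fin n → ℝ) (hu : IsSpectralBasis G d u lam) :
    ∀ i : Fin k,
      |‖center (spectralEmbedding u hkn) (C i)‖ ^ 2 - 1 / ((C i).card : ℝ)| ≤
        (4 * Real.sqrt ε / φ) * (1 / ((C i).card : ℝ)) := by
  classical
  intro i
  obtain ⟨hdisj, hcover, hin, hout⟩ := hC
  have hd0 : 0 < d := by omega
  have hdR : (0:ℝ) < (d:ℝ) := by exact_mod_cast hd0
  have hφ0 : (0:ℝ) < φ := hφ.1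
  have hε0 : (0:ℝ) < ε := hε.1
  have hsε : Real.sqrt ε ^ 2 = ε := Real.sq_sqrt hε0.le
  have hsεpos : 0 < Real.sqrt ε := Real.sqrt_pos.mpr hε0
  -- edge expansion within each cluster
  have HP : ∀ i' : Fin k, ∀ S ⊆ C i', 0 < S.card → 2 * S.card ≤ (C i').card →
      φ * ↑d * S.card ≤ eB G S (C i' \ S) := by
    intro i' S hSsub hS0 hS2
    have h1 : 1 < (C i').card := by omega
    have hphi := hin i'
    rw [phiIn, if_pos h1] at hphi
    have hmem : ((edgesBetween G S (C i' \ S) : ℝ) / (↑d * S.card)) ∈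
        {r : ℝ | ∃ S', S' ⊆ C i' ∧ 0 < S'.card ∧ 2 * S'.card ≤ (C i').card ∧
          r = (edgesBetween G S' (C i' \ S') : ℝ) / (↑d * S'.card)} :=
      ⟨S, hSsub, hS0, hS2, rfl⟩
    have hbdd : BddBelow {r : ℝ | ∃ S', S' ⊆ C i' ∧ 0 < S'.card ∧ 2 * S'.card ≤ (C i').card ∧
        r = (edgesBetween G S' (C i' \ S') : ℝ) / (↑d * S'.card)} := by
      refine ⟨0, fun r hr => ?_⟩
      obtain ⟨S', _, _, _, hr'⟩ := hr
      rw [hr']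
      positivity
    have hle := le_trans hphi (csInf_le hbdd hmem)
    rw [eB_eq]
    have hden : (0:ℝ) < ↑d * S.card := by
      have : (0:ℝ) < (S.card : ℝ) := by exact_mod_cast hS0
      positivity
    have := (le_div_iff₀ hden).mp hle
    linarith
  -- global spectral gap inequality
  have hpart : ∀ f : Fin n → ℝ, ∑ x, f x = ∑ i', ∑ x ∈ C i', f x := by
    intro f
    have hbi : Finset.univ.biUnion C = Finset.univ := by
      ext x
      simp only [Finset.mem_biUnion, Finset.mem_univ, true_and, iff_true]
      exact hcover x
    rw [← hbi, Finset.sum_biUnion]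
    intro a _ b _ hab
    exact hdisj a b hab
  have global : ∀ v : Fin n → ℝ, (∀ i', ∑ x ∈ C i', v x = 0) →
      φ^2 * ↑d * ∑ x, v x ^ 2 ≤ QF G v := by
    intro v hv
    have hper := fun i' => cluster_gap G hφ0.le hd0 (C i') hreg (HP i') v (hv i')
    have h1 : φ^2 * ↑d * ∑ x, v x ^ 2
        = ∑ i', φ^2 * ↑d * ∑ x ∈ C i', v x ^ 2 := by
      rw [hpart (fun x => v x ^ 2), Finset.mul_sum]
    have h2 : ∑ i', (∑ x ∈ C i', ∑ y ∈ C i', if G.Adj x y then (v x - v y)^2 else 0)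
        ≤ QF G v := by
      have h3 : QF G v = ∑ i', ∑ x ∈ C i', ∑ y, if G.Adj x y then (v x - v y)^2 else 0 := by
        rw [QF, hpart (fun x => ∑ y, if G.Adj x y then (v x - v y)^2 else 0)]
      rw [h3]
      refine Finset.sum_le_sum fun i' _ => Finset.sum_le_sum fun x _ => ?_
      refine Finset.sum_le_sum_of_subset_of_nonneg (Finset.subset_univ _) fun y _ _ => ?_
      split <;> positivity
    calc φ^2 * ↑d * ∑ x, v x ^ 2 = ∑ i', φ^2 * ↑d * ∑ x ∈ C i', v x ^ 2 := h1
      _ ≤ ∑ i', (∑ x ∈ C i', ∑ y ∈ C i', if G.Adj x y then (v x - v y)^2 else 0) :=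
          Finset.sum_le_sum fun i' _ => hper i'
      _ ≤ QF G v := h2
  -- eigenvalue lower bound
  have hgapk : ∀ hlt : k < n, φ^2 / 2 ≤ lam ⟨k, hlt⟩ := by
    intro hlt
    have hkn1 : k + 1 ≤ n := hlt
    set e : Fin (k+1) → Fin n := Fin.castLE hkn1 with hedef
    have he : Function.Injective e := Fin.castLE_injective hkn1
    set M : Matrix (Fin k) (Fin (k+1)) ℝ :=
      Matrix.of fun i' j => ∑ x ∈ C i', u (e j) x with hMdef
    have hnotinj : ¬ Function.Injective M.mulVecLin := by
      intro hinj
      have h1 := LinearMap.finrank_le_finrank_of_injective hinj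
      rw [Module.finrank_pi, Module.finrank_pi, Fintype.card_fin, Fintype.card_fin] at h1
      omega
    obtain ⟨a, b, hab, hne⟩ := Function.not_injective_iff.mp hnotinj
    set β : Fin (k+1) → ℝ := a - b with hβdef
    have hβ0 : β ≠ 0 := sub_ne_zero.mpr hne
    have hker : M.mulVecLin β = 0 := by rw [hβdef, map_sub, hab, sub_self]
    set v : Fin n → ℝ := fun x => ∑ j, β j * u (e j) x with hvdef
    have hvsum : ∀ i', ∑ x ∈ C i', v x = 0 := by
      intro i'
      have h0 : M.mulVec β i' = 0 := by
        have := congrFun hker i'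
        rwa [Matrix.mulVecLin_apply] at this
      calc ∑ x ∈ C i', v x = ∑ x ∈ C i', ∑ j, β j * u (e j) x := rfl
        _ = ∑ j, ∑ x ∈ C i', β j * u (e j) x := Finset.sum_comm
        _ = ∑ j, M i' j * β j := by
            refine Finset.sum_congr rfl fun j _ => ?_
            rw [← Finset.mul_sum, mul_comm]
            rfl
        _ = M.mulVec β i' := rfl
        _ = 0 := h0
    have hnorm : ∑ x, v x * v x = ∑ j, β j * β j := dot_expand G hu e he β β
    have hβpos : 0 < ∑ j, β j * β j := by
      have hnz : ∃ j, β j ≠ 0 := by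
        by_contra hc
        push_neg at hc
        exact hβ0 (funext hc)
      obtain ⟨j0, hj0⟩ := hnz
      refine Finset.sum_pos' (fun j _ => mul_self_nonneg _) ⟨j0, Finset.mem_univ _, ?_⟩
      exact mul_self_pos.mpr hj0
    have hLv : ∑ x, v x * ((normLap G d *ᵥ v) x) = ∑ j, lam (e j) * (β j * β j) := by
      have h1 : ∀ x, (normLap G d *ᵥ v) x = ∑ j, (β j * lam (e j)) * u (e j) x := by
        intro x
        rw [hvdef]
        exact lap_on_expand G hu e β x
      calc ∑ x, v x * ((normLap G d *ᵥ v) x)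
          = ∑ x, (∑ j, β j * u (e j) x) * (∑ j, (β j * lam (e j)) * u (e j) x) := by
            exact Finset.sum_congr rfl fun x _ => by rw [h1 x]
        _ = ∑ j, β j * (β j * lam (e j)) := dot_expand G hu e he β fun j => β j * lam (e j)
        _ = ∑ j, lam (e j) * (β j * β j) := Finset.sum_congr rfl fun j _ => by ring
    have hqf := dot_lap_qf G hd0 hreg v
    have hgap := global v hvsum
    have hv2 : ∑ x, v x ^ 2 = ∑ j, β j * β j := by
      rw [← hnorm]
      exact Finset.sum_congr rfl fun x _ => by ring
    have hlamle : ∑ j, lam (e j) * (β j * β j) ≤ lam ⟨k, hlt⟩ * ∑ j, β j * β j := by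
      rw [Finset.mul_sum]
      refine Finset.sum_le_sum fun j _ => ?_
      refine mul_le_mul_of_nonneg_right ?_ (mul_self_nonneg _)
      refine hu.2.2 ?_
      exact Fin.le_def.mpr (Nat.lt_succ_iff.mp j.2)
    -- chain
    have hQFv : QF G v = 2 * ↑d * ∑ j, lam (e j) * (β j * β j) := by
      have h2d : (2 * (d:ℝ)) ≠ 0 := by positivity
      rw [← hLv, hqf]
      field_simp
    have hchain : φ^2 * ↑d * ∑ j, β j * β j ≤ 2 * ↑d * (lam ⟨k, hlt⟩ * ∑ j, β j * β j) := by
      calc φ^2 * ↑d * ∑ j, β j * β j = φ^2 * ↑d * ∑ x, v x ^ 2 := by rw [hv2]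
        _ ≤ QF G v := hgap
        _ = 2 * ↑d * ∑ j, lam (e j) * (β j * β j) := hQFv
        _ ≤ 2 * ↑d * (lam ⟨k, hlt⟩ * ∑ j, β j * β j) := by
            exact mul_le_mul_of_nonneg_left hlamle (by positivity)
    nlinarith [mul_pos hdR hβpos]
  -- main computation for cluster i
  rcases Nat.eq_zero_or_pos (C i).card with hN0 | hNpos
  · have hCe : C i = ∅ := Finset.card_eq_zero.mp hN0
    simp [hCe, center]
  · have hNR : (0:ℝ) < ((C i).card : ℝ) := by exact_mod_cast hNpos
    set Ci := C i with hCidef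
    set N : ℝ := (Ci.card : ℝ) with hNdef
    set s : Fin n → ℝ := fun j => ∑ x ∈ Ci, u j x with hsdef
    set χ : Fin n → ℝ := fun x => if x ∈ Ci then (1:ℝ) else 0 with hχdef
    have hχ : ∀ x, χ x = ∑ j, s j * u j x := fun x => expand_indicator G hu Ci x
    have hid : Function.Injective (id : Fin n → Fin n) := fun _ _ h => h
    have hχN : ∑ x, χ x * χ x = N := by
      have hpt : ∀ x, χ x * χ x = if x ∈ Ci then (1:ℝ) else 0 := by
        intro x; by_cases hx : x ∈ Ci <;> simp [hχdef, hx]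
      rw [Finset.sum_congr rfl fun x _ => hpt x, Finset.sum_ite_mem, Finset.univ_inter,
        Finset.sum_const, nsmul_eq_mul, mul_one, hNdef]
    have hpars : ∑ j, s j * s j = N := by
      have h1 : ∑ x, χ x * χ x = ∑ j, s j * s j := by
        calc ∑ x, χ x * χ x
            = ∑ x, (∑ j, s j * u (id j) x) * (∑ j, s j * u (id j) x) := by
              exact Finset.sum_congr rfl fun x _ => by rw [hχ x]; rfl
          _ = ∑ j, s j * s j := dot_expand G hu id hid s s
      rw [← h1, hχN]
    have hχfun : χ = fun x => ∑ j, s j * u (id j) x := funext fun x => by rw [hχ x]; rfl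
    have hRay : ∑ x, χ x * ((normLap G d *ᵥ χ) x) = ∑ j, lam j * (s j * s j) := by
      calc ∑ x, χ x * ((normLap G d *ᵥ χ) x)
          = ∑ x, (∑ j, s j * u (id j) x) * (∑ j, (s j * lam (id j)) * u (id j) x) := by
            refine Finset.sum_congr rfl fun x _ => ?_
            rw [hχ x, hχfun, lap_on_expand G hu id s x]
            simp only [id_eq]
        _ = ∑ j, s j * (s j * lam (id j)) := dot_expand G hu id hid s fun j => s j * lam (id j)
        _ = ∑ j, lam j * (s j * s j) := Finset.sum_congr rfl fun j _ => by
              simp only [id_eq]; ring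
    have hS2 : S2 G χ = eB G Ci Ci := by
      rw [S2, eB]
      have houter : ∀ x : Fin n, (∑ y : Fin n, if G.Adj x y then χ x * χ y else 0)
          = (if x ∈ Ci then ∑ y ∈ Ci, (if G.Adj x y then (1:ℝ) else 0) else 0) := by
        intro x
        by_cases hx : x ∈ Ci
        · rw [if_pos hx]
          rw [show (∑ y ∈ Ci, (if G.Adj x y then (1:ℝ) else 0))
              = ∑ y ∈ Finset.univ ∩ Ci, (if G.Adj x y then (1:ℝ) else 0) by
            rw [Finset.univ_inter], ← Finset.sum_ite_mem]
          refine Finset.sum_congr rfl fun y _ => ?_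
          by_cases hy : y ∈ Ci <;> by_cases ha : G.Adj x y <;> simp [hχdef, hx, hy, ha]
        · rw [if_neg hx]
          refine Finset.sum_eq_zero fun y _ => ?_
          by_cases ha : G.Adj x y <;> simp [hχdef, hx, ha]
      rw [Finset.sum_congr rfl fun x _ => houter x, Finset.sum_ite_mem, Finset.univ_inter]
    have hdN : eB G Ci Ci + eB G Ci Ciᶜ = ↑d * N := by
      rw [eB, eB, ← Finset.sum_add_distrib]
      have hdeg : ∀ x ∈ Ci, (∑ y ∈ Ci, if G.Adj x y then (1:ℝ) else 0)
          + (∑ y ∈ Ciᶜ, if G.Adj x y then (1:ℝ) else 0) = (d:ℝ) := by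
        intro x _
        rw [Finset.sum_add_sum_compl]
        rw [← Finset.sum_filter, Finset.sum_const, nsmul_eq_mul, mul_one,
          ← SimpleGraph.neighborFinset_eq_filter]
        have hx' : (G.neighborFinset x).card = d := hreg x
        exact_mod_cast hx'
      rw [Finset.sum_congr rfl hdeg, Finset.sum_const, nsmul_eq_mul, hNdef]
      ring
    have hχsq : ∑ x, χ x ^ 2 = N := by
      rw [← hχN]; exact Finset.sum_congr rfl fun x _ => by ring
    set eout : ℝ := eB G Ci Ciᶜ with heout
    have heout0 : 0 ≤ eout := eB_nonneg G Ci Ciᶜ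
    have hsum_lam : ∑ j, lam j * (s j * s j) = eout / ↑d := by
      rw [← hRay, dot_lap, hχsq, hS2]
      have : eB G Ci Ci = ↑d * N - eout := by linarith
      rw [this]
      field_simp
      ring
    have hεN : ∑ j, lam j * (s j * s j) ≤ ε * N := by
      have hpo := hout i
      rw [phiOut, ← hCidef] at hpo
      have h1 : (edgesBetween G Ci Ciᶜ : ℝ) ≤ ε * (↑d * N) := by
        have hden : (0:ℝ) < ↑d * N := by positivity
        rw [div_le_iff₀ hden] at hpo
        · linarith [hpo]
      rw [hsum_lam, heout, eB_eq, div_le_iff₀ hdR]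
      calc (edgesBetween G Ci Ciᶜ : ℝ) ≤ ε * (↑d * N) := h1
        _ = ε * N * ↑d := by ring
    -- center coordinates
    have hmu : ∀ i' : Fin k, (center (spectralEmbedding u hkn) Ci) i'
        = N⁻¹ * s (Fin.castLE hkn i') := by
      intro i'
      rw [center]
      rw [show ((((Ci.card : ℝ))⁻¹ • ∑ x ∈ Ci, spectralEmbedding u hkn x) i')
          = (Ci.card : ℝ)⁻¹ * ((∑ x ∈ Ci, spectralEmbedding u hkn x) i') from rfl]
      rw [show ((∑ x ∈ Ci, spectralEmbedding u hkn x) i')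
          = ∑ x ∈ Ci, spectralEmbedding u hkn x i' from by rw [WithLp.ofLp_sum]; exact Finset.sum_apply i' Ci _]
      rw [hNdef, hsdef]
      congr 1
    have hnormsq : ‖center (spectralEmbedding u hkn) Ci‖^2
        = N⁻¹ * N⁻¹ * ∑ i' : Fin k, s (Fin.castLE hkn i') * s (Fin.castLE hkn i') := by
      rw [EuclideanSpace.norm_eq, Real.sq_sqrt (Finset.sum_nonneg fun i' _ => by positivity)]
      rw [Finset.sum_congr rfl fun i' (_ : i' ∈ Finset.univ) => by
        rw [hmu i', Real.norm_eq_abs, sq_abs]]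
      rw [Finset.mul_sum]
      exact Finset.sum_congr rfl fun i' _ => by ring
    set H : ℝ := ∑ j ∈ Finset.univ.filter (fun j : Fin n => (j:ℕ) < k), s j * s j with hHdef
    set T : ℝ := ∑ j ∈ Finset.univ.filter (fun j : Fin n => ¬((j:ℕ) < k)), s j * s j
      with hTdef
    have hHT : H + T = N := by
      rw [hHdef, hTdef, Finset.sum_filter_add_sum_filter_not, hpars]
    have hTnn : (0:ℝ) ≤ T := Finset.sum_nonneg fun j _ => mul_self_nonneg _
    have hHnn : (0:ℝ) ≤ H := Finset.sum_nonneg fun j _ => mul_self_nonneg _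
    have hHeq : ∑ i' : Fin k, s (Fin.castLE hkn i') * s (Fin.castLE hkn i') = H := by
      rw [hHdef]
      refine Finset.sum_bij (fun i' _ => Fin.castLE hkn i') ?_ ?_ ?_ ?_
      · intro i' _
        refine Finset.mem_filter.mpr ⟨Finset.mem_univ _, ?_⟩
        exact i'.2
      · intro a _ b _ hab
        exact Fin.castLE_injective hkn hab
      · intro j hj
        have hjk : (j:ℕ) < k := (Finset.mem_filter.mp hj).2
        exact ⟨⟨(j:ℕ), hjk⟩, Finset.mem_univ _, Fin.ext rfl⟩
      · intro i' _
        rfl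
    have hLHS : |‖center (spectralEmbedding u hkn) Ci‖^2 - 1/N| = T * (N⁻¹ * N⁻¹) := by
      rw [hnormsq, hHeq]
      have hH : H = N - T := by linarith
      have hNe : N ≠ 0 := ne_of_gt hNR
      have heq : N⁻¹ * N⁻¹ * H - 1/N = -(T * (N⁻¹ * N⁻¹)) := by
        rw [hH]
        calc N⁻¹ * N⁻¹ * (N - T) - 1/N
            = (N⁻¹ * N) * N⁻¹ - N⁻¹ * N⁻¹ * T - N⁻¹ := by rw [one_div]; ring
          _ = -(T * (N⁻¹ * N⁻¹)) := by rw [inv_mul_cancel₀ hNe]; ring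
      rw [heq, abs_neg, abs_of_nonneg (mul_nonneg hTnn
        (mul_nonneg (inv_nonneg.mpr hNR.le) (inv_nonneg.mpr hNR.le)))]
    have hT4 : T ≤ (4 * Real.sqrt ε / φ) * N := by
      rcases lt_or_eq_of_le hkn with hlt | hkeqn
      · -- spectral bound available
        have hlam := hgapk hlt
        have htail : lam ⟨k, hlt⟩ * T ≤ ∑ j, lam j * (s j * s j) := by
          have h1 : ∑ j ∈ Finset.univ.filter (fun j : Fin n => ¬((j:ℕ) < k)),
              lam j * (s j * s j) ≤ ∑ j, lam j * (s j * s j) := by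
            refine Finset.sum_le_sum_of_subset_of_nonneg (Finset.filter_subset _ _)
              fun j _ _ => mul_nonneg (lam_nonneg G hd0 hreg hu j) (mul_self_nonneg _)
          have h2 : lam ⟨k, hlt⟩ * T ≤ ∑ j ∈ Finset.univ.filter
              (fun j : Fin n => ¬((j:ℕ) < k)), lam j * (s j * s j) := by
            rw [hTdef, Finset.mul_sum]
            refine Finset.sum_le_sum fun j hj => ?_
            have hjk : k ≤ (j:ℕ) := Nat.le_of_not_lt (Finset.mem_filter.mp hj).2
            exact mul_le_mul_of_nonneg_right (hu.2.2 (Fin.le_def.mpr hjk)) (mul_self_nonneg _)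
          linarith
        have hkey : φ^2 / 2 * T ≤ ε * N := by
          have := mul_le_mul_of_nonneg_right hlam hTnn
          linarith [htail, hεN]
        by_cases hcase : 4 * Real.sqrt ε / φ < 1
        · have h4ε : 4 * Real.sqrt ε < φ := by rwa [div_lt_one hφ0] at hcase
          rw [div_mul_eq_mul_div, le_div_iff₀ hφ0]
          -- goal : T * φ ≤ 4 * √ε * N
          nlinarith [hkey, hsε, hsεpos, hTnn, hNR.le, h4ε, hφ0,
            mul_nonneg hsεpos.le hNR.le, mul_nonneg hTnn hφ0.le]
        · push_neg at hcase
          calc T ≤ N := by linarith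
            _ ≤ (4 * Real.sqrt ε / φ) * N := le_mul_of_one_le_left hNR.le hcase
      · -- k = n : tail is empty
        have hTzero : T = 0 := by
          rw [hTdef]
          refine Finset.sum_eq_zero fun j hj => ?_
          exfalso
          have := (Finset.mem_filter.mp hj).2
          have hj2 := j.2
          omega
        rw [hTzero]
        exact mul_nonneg (div_nonneg (mul_nonneg (by norm_num) hsεpos.le) hφ0.le) hNR.le
    rw [hLHS]
    have hNe : N ≠ 0 := ne_of_gt hNR
    calc T * (N⁻¹ * N⁻¹) ≤ ((4 * Real.sqrt ε / φ) * N) * (N⁻¹ * N⁻¹) := by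
          refine mul_le_mul_of_nonneg_right hT4
            (mul_nonneg (inv_nonneg.mpr hNR.le) (inv_nonneg.mpr hNR.le))
      _ = (4 * Real.sqrt ε / φ) * (1 / N) := by
          calc ((4 * Real.sqrt ε / φ) * N) * (N⁻¹ * N⁻¹)
              = (4 * Real.sqrt ε / φ) * N⁻¹ * (N * N⁻¹) := by ring
            _ = (4 * Real.sqrt ε / φ) * (1 / N) := by
                rw [mul_inv_cancel₀ hNe, one_div, mul_one]
end

section
/- Let k ≥ 2 be an integer, φ ∈ (0,1), ε ∈ (0,1), and let c be an integer with 0 ≤ c ≤ dφ²/(2√10). Let G₀ = (V,E₀) be a d-regular n-vertex graph that admits a (k,φ,ε)-clustering C_1,…,C_k. Let G be a graph obtained from G₀ by deleting, for each i ∈ [k], at most c edges whose both endpoints lie in C_i (and no other edges). Then C_1,…,C_k is a (k, φ²/8, ε)-clustering of G, where conductances in the d-bounded graph G are computed with denominators d|S| and d|C| as in the d-regular convention; in particular, φ_in(C_i) ≥ φ²/8 and φ_out(C_i,V) ≤ ε in G for every i ∈ [k]. -/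
open Finset Matrix Real
open scoped RealInnerProductSpace

lemma edgesBetween_mono {n : ℕ} {G G₀ : SimpleGraph (Fin n)} [DecidableRel G.Adj]
    [DecidableRel G₀.Adj] (h : G ≤ G₀) (S T : Finset (Fin n)) :
    edgesBetween G S T ≤ edgesBetween G₀ S T := by
  apply Finset.card_le_card
  intro p hp
  simp only [edgesBetween, Finset.mem_filter] at *
  exact ⟨hp.1, h hp.2⟩

open Classical in
lemma edgesBetween_ge {n : ℕ} (G G₀ : SimpleGraph (Fin n)) [DecidableRel G.Adj]
    [DecidableRel G₀.Adj] (hsub : G ≤ G₀) (Ci S : Finset (Fin n)) (hS : S ⊆ Ci) :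
    edgesBetween G₀ S (Ci \ S) ≤ edgesBetween G S (Ci \ S) +
      ((G₀.edgeFinset \ G.edgeFinset).filter fun e => ∀ v ∈ e, v ∈ Ci).card := by
  classical
  have hP : ∀ p : Fin n × Fin n, p ∈ S ×ˢ (Ci \ S) ↔ p.1 ∈ S ∧ p.2 ∈ Ci ∧ p.2 ∉ S := by
    intro p; simp [Finset.mem_product, Finset.mem_sdiff, and_assoc]
  set P := S ×ˢ (Ci \ S) with hPdef
  have hsplit := Finset.card_filter_add_card_filter_not
    (s := P.filter fun p => G₀.Adj p.1 p.2) (p := fun p => G.Adj p.1 p.2)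
  have h1 : ((P.filter fun p => G₀.Adj p.1 p.2).filter fun p => G.Adj p.1 p.2).card ≤
      edgesBetween G S (Ci \ S) := by
    apply Finset.card_le_card
    intro p hp
    simp only [Finset.mem_filter, edgesBetween] at *
    exact ⟨hp.1.1, hp.2⟩
  have h2 : ((P.filter fun p => G₀.Adj p.1 p.2).filter fun p => ¬ G.Adj p.1 p.2).card ≤
      ((G₀.edgeFinset \ G.edgeFinset).filter fun e => ∀ v ∈ e, v ∈ Ci).card := by
    apply Finset.card_le_card_of_injOn (fun p => s(p.1, p.2))
    · intro p hp
      simp only [Finset.mem_coe, Finset.mem_filter] at hp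
      rw [hP] at hp
      simp only [Finset.mem_coe, Finset.mem_filter, Finset.mem_sdiff,
        SimpleGraph.mem_edgeFinset, SimpleGraph.mem_edgeSet]
      refine ⟨⟨hp.1.2, hp.2⟩, ?_⟩
      intro v hv
      rcases Sym2.mem_iff.mp hv with rfl | rfl
      · exact hS hp.1.1.1
      · exact hp.1.1.2.1
    · intro p hp q hq hpq
      simp only [Finset.mem_coe, Finset.mem_filter] at hp hq
      rw [hP] at hp hq
      rcases Sym2.eq_iff.mp hpq with ⟨h1', h2'⟩ | ⟨h1', h2'⟩
      · exact Prod.ext h1' h2'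
      · exfalso; exact hq.1.1.2.2 (h1' ▸ hp.1.1.1)
  calc edgesBetween G₀ S (Ci \ S)
      = ((P.filter fun p => G₀.Adj p.1 p.2).filter fun p => G.Adj p.1 p.2).card +
        ((P.filter fun p => G₀.Adj p.1 p.2).filter fun p => ¬ G.Adj p.1 p.2).card := by
        rw [hsplit]; rfl
    _ ≤ _ := Nat.add_le_add h1 h2

lemma phiIn_set_bddBelow {n : ℕ} (G : SimpleGraph (Fin n)) [DecidableRel G.Adj]
    (d : ℕ) (Ci : Finset (Fin n)) :
    BddBelow {r : ℝ | ∃ S, S ⊆ Ci ∧ 0 < S.card ∧ 2 * S.card ≤ Ci.card ∧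
      r = (edgesBetween G S (Ci \ S) : ℝ) / (d * S.card)} := by
  refine ⟨0, ?_⟩
  rintro r ⟨S, _, _, _, rfl⟩
  positivity

open Classical in
/-- Let `0 ≤ c ≤ dφ²/(2√10)` and let `G₀` be a `d`-regular `n`-vertex
graph admitting a `(k,φ,ε)`-clustering `C_1,…,C_k`. If `G` is obtained from `G₀` by
deleting, for each `i`, at most `c` edges with both endpoints in `C_i` (and no other
edges), then `C_1,…,C_k` is a `(k, φ²/8, ε)`-clustering of `G` (conductances in the
`d`-bounded graph `G` being computed with denominators `d|S|`, `d|C|`). -/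
theorem statement_14 {n d k : ℕ} (hd : 3 ≤ d) (hk : 2 ≤ k)
    {φ ε : ℝ} (hφ : φ ∈ Set.Ioo (0:ℝ) 1) (hε : ε ∈ Set.Ioo (0:ℝ) 1)
    (c : ℕ) (hc : (c : ℝ) ≤ d * φ ^ 2 / (2 * Real.sqrt 10))
    (G₀ G : SimpleGraph (Fin n)) [DecidableRel G₀.Adj] [DecidableRel G.Adj]
    (hreg : G₀.IsRegularOfDegree d)
    (C : Fin k → Finset (Fin n)) (hC : IsClustering G₀ d k φ ε C)
    (hsub : G ≤ G₀)
    (hdel : ∀ x y, G₀.Adj x y → ¬ G.Adj x y → ∃ i, x ∈ C i ∧ y ∈ C i)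
    (hcount : ∀ i,
      ((G₀.edgeFinset \ G.edgeFinset).filter fun e => ∀ v ∈ e, v ∈ C i).card ≤ c) :
    IsClustering G d k (φ ^ 2 / 8) ε C := by
  obtain ⟨hdisj, hcov, hin, hout⟩ := hC
  obtain ⟨hφ0, hφ1⟩ := hφ
  obtain ⟨hε0, hε1⟩ := hε
  have hsqrt : (3:ℝ) ≤ Real.sqrt 10 := by
    nlinarith [Real.sq_sqrt (by norm_num : (0:ℝ) ≤ 10), Real.sqrt_nonneg 10]
  have hc6 : (c : ℝ) ≤ d * φ ^ 2 / 6 := by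
    refine hc.trans ?_
    have hd0 : (0:ℝ) ≤ d * φ ^ 2 := by positivity
    gcongr
    linarith
  refine ⟨hdisj, hcov, ?_, ?_⟩
  · -- inner conductance
    intro i
    unfold phiIn
    by_cases hcard : 1 < (C i).card
    · rw [if_pos hcard]
      have hne : {r : ℝ | ∃ S, S ⊆ C i ∧ 0 < S.card ∧ 2 * S.card ≤ (C i).card ∧
          r = (edgesBetween G S (C i \ S) : ℝ) / (d * S.card)}.Nonempty := by
        have : (C i).Nonempty := Finset.card_pos.mp (by omega)
        obtain ⟨x, hx⟩ := this
        exact ⟨_, {x}, Finset.singleton_subset_iff.mpr hx, by simp, by simp; omega, rfl⟩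
      refine le_csInf hne ?_
      rintro r ⟨S, hS, hS0, hS2, rfl⟩
      -- bound on G₀ side
      have hφin := hin i
      unfold phiIn at hφin
      rw [if_pos hcard] at hφin
      have hmem : (edgesBetween G₀ S (C i \ S) : ℝ) / (d * S.card) ∈
          {r : ℝ | ∃ S', S' ⊆ C i ∧ 0 < S'.card ∧ 2 * S'.card ≤ (C i).card ∧
            r = (edgesBetween G₀ S' (C i \ S') : ℝ) / (d * S'.card)} :=
        ⟨S, hS, hS0, hS2, rfl⟩
      have h0 : φ ≤ (edgesBetween G₀ S (C i \ S) : ℝ) / (d * S.card) :=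
        hφin.trans (csInf_le (phiIn_set_bddBelow G₀ d (C i)) hmem)
      have hdS : (0:ℝ) < d * S.card := by
        have : (0:ℝ) < (S.card : ℝ) := by exact_mod_cast hS0
        have : (0:ℝ) < (d:ℝ) := by exact_mod_cast (by omega : 0 < d)
        positivity
      have h0' : φ * (d * S.card) ≤ (edgesBetween G₀ S (C i \ S) : ℝ) := by
        exact (le_div_iff₀ hdS).mp h0
      have hEc : (edgesBetween G₀ S (C i \ S) : ℝ) ≤
          (edgesBetween G S (C i \ S) : ℝ) + c := by
        have := edgesBetween_ge G G₀ hsub (C i) S hS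
        have hcc := hcount i
        have : edgesBetween G₀ S (C i \ S) ≤ edgesBetween G S (C i \ S) + c := by
          calc edgesBetween G₀ S (C i \ S) ≤ _ := this
            _ ≤ edgesBetween G S (C i \ S) + c := by
                exact Nat.add_le_add_left (by exact_mod_cast hcc) _
        exact_mod_cast this
      rw [le_div_iff₀ hdS]
      have hd3 : (3:ℝ) ≤ (d:ℝ) := by exact_mod_cast hd
      have hS1 : (1:ℝ) ≤ (S.card : ℝ) := by exact_mod_cast hS0
      have hφsq : φ ^ 2 ≤ φ := by nlinarith
      nlinarith [mul_le_mul_of_nonneg_left hS1 (by positivity : (0:ℝ) ≤ d * φ ^ 2)]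
    · rw [if_neg hcard]
      nlinarith
  · -- outer conductance
    intro i
    have houti := hout i
    unfold phiOut at *
    by_cases hcard : (C i).card = 0
    · rw [hcard]
      simp only [Nat.cast_zero, mul_zero, div_zero]
      linarith
    · have hdC : (0:ℝ) < d * (C i).card := by
        have h1 : (0:ℝ) < ((C i).card : ℝ) := by exact_mod_cast Nat.pos_of_ne_zero hcard
        have h2 : (0:ℝ) < (d:ℝ) := by exact_mod_cast (by omega : 0 < d)
        positivity
      refine le_trans ?_ houti
      gcongr
      exact_mod_cast edgesBetween_mono hsub (C i) (C i)ᶜ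
end
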